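/- Let n ≥ 1, let p : Fin n → MvPolynomial (Fin n) ℝ be such that for each i there are polynomials r_i, s_i with nonnegative coefficients, total degree of r_i at most 2, total degree of s_i at most 1, and p_i = r_i − X_i·s_i. Let x : [0, ∞) → ℝ^n be a differentiable solution of x′(t) = p(x(t)) with x(0) = 0, with x_i(t) ≥ 0 for all i and t, with all coordinates bounded, with x_1(t) ≤ 1 − c for all t for some constant c > 0, and with x_1(t) → α as t → ∞. Then there exist a polynomial vector field C : Fin (n+1) → MvPolynomial (Fin (n+1)) ℝ and a differentiable function y : [0, ∞) → ℝ^{n+1} such that: (1) each C_k is a homogeneous polynomial of degree 3 of the form A_k − X_k·B_k where A_k is a homogeneous degree-3 polynomial with nonnegative coefficients, B_k is a homogeneous degree-2 polynomial with nonnegative coefficients, and the coefficient of X_k³ in A_k is zero; (2) ∑_k C_k = 0; (3) y′(t) = C(y(t)) for all t ≥ 0, y_0(0) = 1 and y_k(0) = 0 for k ≠ 0, y_k(t) ≥ 0 and ∑_k y_k(t) = 1 for all t ≥ 0; and (4) y_1(t) → α as t → ∞. -/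

import Mathlib

open MvPolynomial Filter

namespace Stmt9Aux

set_option linter.unusedSectionVars false

variable {σ τ : Type*} [Fintype σ] [DecidableEq σ] [Fintype τ] [DecidableEq τ]

/-- nonnegative coefficients -/
def NN (q : MvPolynomial σ ℝ) : Prop := ∀ d, 0 ≤ q.coeff d

lemma NN.add {p q : MvPolynomial σ ℝ} (hp : NN p) (hq : NN q) : NN (p + q) := fun d => by
  rw [coeff_add]; exact add_nonneg (hp d) (hq d)

lemma NN.mul {p q : MvPolynomial σ ℝ} (hp : NN p) (hq : NN q) : NN (p * q) := fun d => by
  classical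
  rw [coeff_mul]
  exact Finset.sum_nonneg fun x _ => mul_nonneg (hp _) (hq _)

lemma NN_monomial (m : σ →₀ ℕ) {a : ℝ} (ha : 0 ≤ a) : NN (monomial m a) := fun d => by
  classical
  rw [coeff_monomial]
  split <;> simp [ha]

lemma NN_C {a : ℝ} (ha : 0 ≤ a) : NN (MvPolynomial.C (a : ℝ) : MvPolynomial σ ℝ) := by
  rw [C_apply]; exact NN_monomial _ ha

lemma NN_X (i : σ) : NN (X i : MvPolynomial σ ℝ) := by
  rw [X]; exact NN_monomial _ zero_le_one

lemma NN.sum {ι : Type*} (s : Finset ι) (f : ι → MvPolynomial σ ℝ)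
    (h : ∀ i ∈ s, NN (f i)) : NN (∑ i ∈ s, f i) := fun d => by
  rw [coeff_sum]
  exact Finset.sum_nonneg fun i hi => h i hi d

lemma NN.pow {p : MvPolynomial σ ℝ} (hp : NN p) (k : ℕ) : NN (p ^ k) := by
  induction k with
  | zero => simpa using NN_monomial (0 : σ →₀ ℕ) zero_le_one
  | succ k ih => rw [pow_succ]; exact ih.mul hp

lemma NN.prod {ι : Type*} (s : Finset ι) (f : ι → MvPolynomial σ ℝ)
    (h : ∀ i ∈ s, NN (f i)) : NN (∏ i ∈ s, f i) := by
  classical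
  induction s using Finset.induction_on with
  | empty => simpa using NN_monomial (0 : σ →₀ ℕ) zero_le_one
  | insert _ _ hx ih =>
      rw [Finset.prod_insert hx]
      exact (h _ (Finset.mem_insert_self _ _)).mul
        (ih fun i hi => h i (Finset.mem_insert_of_mem hi))

/-- homogenization to degree `d` using the sum of all variables -/
noncomputable def hmg (d : ℕ) (q : MvPolynomial σ ℝ) : MvPolynomial σ ℝ :=
  ∑ m ∈ q.support, monomial m (q.coeff m) * (∑ j : σ, X j) ^ (d - m.degree)

lemma NN_sumX : NN (∑ j : σ, X j) := NN.sum _ _ fun j _ => NN_X j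

lemma isHomogeneous_sumX : (∑ j : σ, X j : MvPolynomial σ ℝ).IsHomogeneous 1 :=
  IsHomogeneous.sum _ _ _ fun j _ => isHomogeneous_X _ _

lemma NN_hmg (d : ℕ) {q : MvPolynomial σ ℝ} (hq : NN q) : NN (hmg d q) :=
  NN.sum _ _ fun m _ => (NN_monomial m (hq m)).mul (NN_sumX.pow _)

lemma hmg_isHomogeneous {d : ℕ} {q : MvPolynomial σ ℝ} (hq : q.totalDegree ≤ d) :
    (hmg d q).IsHomogeneous d := by
  apply IsHomogeneous.sum
  intro m hm
  have hmd : m.degree ≤ d := le_trans (le_totalDegree hm) hq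
  have h1 : (monomial m (q.coeff m)).IsHomogeneous m.degree :=
    isHomogeneous_monomial _ rfl
  have h2 : ((∑ j : σ, X j : MvPolynomial σ ℝ) ^ (d - m.degree)).IsHomogeneous (d - m.degree) := by
    simpa using isHomogeneous_sumX.pow (d - m.degree)
  simpa [Nat.add_sub_cancel' hmd] using h1.mul h2

lemma eval_hmg (d : ℕ) (q : MvPolynomial σ ℝ) {w : σ → ℝ} (hw : (∑ j : σ, w j) = 1) :
    eval w (hmg d q) = eval w q := by
  rw [hmg]
  rw [eval_sum]
  have : ∀ m ∈ q.support,
      eval w (monomial m (q.coeff m) * (∑ j : σ, X j) ^ (d - m.degree))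
        = eval w (monomial m (q.coeff m)) := by
    intro m _
    rw [eval_mul, map_pow, eval_sum]
    simp [hw]
  rw [Finset.sum_congr rfl this, ← eval_sum, ← as_sum]

lemma aeval_apply_eq (w : τ → ℝ) (p : MvPolynomial τ ℝ) :
    MvPolynomial.aeval (R := ℝ) w p = eval w p := by
  rw [← coe_aeval_eq_eval]; rfl

lemma NN_aeval (f : σ → MvPolynomial τ ℝ) (hf : ∀ i, NN (f i))
    {q : MvPolynomial σ ℝ} (hq : NN q) : NN (aeval f q) := by
  have h : aeval f q = ∑ m ∈ q.support, aeval f (monomial m (q.coeff m)) := by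
    conv_lhs => rw [as_sum q]
    rw [map_sum]
  rw [h]
  apply NN.sum
  intro m _
  rw [aeval_monomial, algebraMap_eq]
  refine (NN_C (hq m)).mul ?_
  rw [Finsupp.prod]
  exact NN.prod _ _ fun i _ => (hf i).pow _

lemma totalDegree_aeval_le (f : σ → MvPolynomial τ ℝ) (hf : ∀ i, (f i).totalDegree ≤ 1)
    (q : MvPolynomial σ ℝ) : (aeval f q).totalDegree ≤ q.totalDegree := by
  conv_lhs => rw [as_sum q]
  rw [map_sum]
  refine (totalDegree_finset_sum _ _).trans ?_
  apply Finset.sup_le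
  intro m hm
  rw [aeval_monomial, algebraMap_eq]
  refine (totalDegree_mul _ _).trans ?_
  rw [totalDegree_C, zero_add, Finsupp.prod]
  refine le_trans (totalDegree_finset_prod _ _) ?_
  refine le_trans (Finset.sum_le_sum fun i _ =>
    (totalDegree_pow _ _).trans (Nat.mul_le_mul_left _ (hf i))) ?_
  simp only [mul_one]
  exact le_trans (le_of_eq rfl) (le_totalDegree hm)

lemma eval_aeval (f : σ → MvPolynomial τ ℝ) (w : τ → ℝ) (q : MvPolynomial σ ℝ) :
    eval w (aeval f q) = eval (fun i => eval w (f i)) q := by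
  have h := comp_aeval_apply (MvPolynomial.aeval (R := ℝ) w) (f := f) q
  rw [aeval_apply_eq] at h
  rw [h]
  have : (fun i => MvPolynomial.aeval (R := ℝ) w (f i)) = fun i => eval w (f i) := by
    funext i; rw [aeval_apply_eq]
  rw [this, ← aeval_apply_eq]

end Stmt9Aux

open Stmt9Aux in
/-- Stage 2: a bounded quadratic CRN-implementable system initialized at zero
that computes `α` in its first coordinate can be converted into a
TPP-implementable cubic form system on the probability simplex computing the
same number. -/
theorem stmt_9 (n : ℕ) (hn : 0 < n) (p : Fin n → MvPolynomial (Fin n) ℝ)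
    (hp : ∀ i : Fin n, ∃ r s : MvPolynomial (Fin n) ℝ,
      (∀ m, 0 ≤ r.coeff m) ∧ (∀ m, 0 ≤ s.coeff m) ∧
      r.totalDegree ≤ 2 ∧ s.totalDegree ≤ 1 ∧ p i = r - X i * s)
    (x : ℝ → (Fin n → ℝ))
    (hode : ∀ t : ℝ, 0 ≤ t → ∀ i : Fin n,
      HasDerivAt (fun t => x t i) (eval (x t) (p i)) t)
    (hx0 : ∀ i : Fin n, x 0 i = 0)
    (hpos : ∀ t : ℝ, 0 ≤ t → ∀ i : Fin n, 0 ≤ x t i)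
    (hbd : ∃ B : ℝ, ∀ t : ℝ, 0 ≤ t → ∀ i : Fin n, x t i ≤ B)
    (c : ℝ) (hc : 0 < c)
    (hx1bd : ∀ t : ℝ, 0 ≤ t → x t ⟨0, hn⟩ ≤ 1 - c)
    (α : ℝ)
    (hlim : Tendsto (fun t => x t ⟨0, hn⟩) atTop (nhds α)) :
    ∃ (C : Fin (n + 1) → MvPolynomial (Fin (n + 1)) ℝ)
      (y : ℝ → (Fin (n + 1) → ℝ)),
      (∀ k : Fin (n + 1), ∃ A B : MvPolynomial (Fin (n + 1)) ℝ,
        (∀ d, 0 ≤ A.coeff d) ∧ (∀ d, 0 ≤ B.coeff d) ∧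
        A.IsHomogeneous 3 ∧ B.IsHomogeneous 2 ∧
        A.coeff (Finsupp.single k 3) = 0 ∧
        C k = A - X k * B) ∧
      (∀ k : Fin (n + 1), (C k).IsHomogeneous 3) ∧
      (∑ k : Fin (n + 1), C k) = 0 ∧
      (∀ t : ℝ, 0 ≤ t → ∀ k : Fin (n + 1),
        HasDerivAt (fun t => y t k) (eval (y t) (C k)) t) ∧
      y 0 0 = 1 ∧ (∀ k : Fin (n + 1), k ≠ 0 → y 0 k = 0) ∧
      (∀ t : ℝ, 0 ≤ t → ∀ k : Fin (n + 1), 0 ≤ y t k) ∧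
      (∀ t : ℝ, 0 ≤ t → (∑ k : Fin (n + 1), y t k) = 1) ∧
      Tendsto (fun t => y t 1) atTop (nhds α) := by
  classical
  choose r s hrNN hsNN hrdeg hsdeg hps using hp
  obtain ⟨B₀, hB₀⟩ := hbd
  set i₀ : Fin n := ⟨0, hn⟩ with hi₀
  set B : ℝ := max B₀ 1 with hBdef
  have hB1 : (1:ℝ) ≤ B := le_max_right _ _
  have hBpos : (0:ℝ) < B := lt_of_lt_of_le one_pos hB1
  have hxB : ∀ t, 0 ≤ t → ∀ i, x t i ≤ B := fun t ht i => (hB₀ t ht i).trans (le_max_left _ _)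
  have hc1 : c ≤ 1 := by
    have h := hx1bd 0 le_rfl
    rw [hx0 i₀] at h
    linarith
  have hnR : (0:ℝ) < n := by exact_mod_cast hn
  set lam : ℝ := c / (2 * n * B) with hlamdef
  have hlampos : 0 < lam := div_pos hc (by positivity)
  set sc : Fin n → ℝ := fun i => if i = i₀ then 1 else lam with hscdef
  have hscpos : ∀ i, 0 < sc i := fun i => by
    by_cases h : i = i₀ <;> simp [hscdef, h, hlampos]
  have hsc1 : sc i₀ = 1 := by simp [hscdef]
  have hsclam : ∀ i, sc i ≤ max 1 lam := fun i => by
    by_cases h : i = i₀ <;> simp [hscdef, h]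
  -- the shrunk trajectory on the simplex
  set z : ℝ → Fin (n+1) → ℝ :=
    fun u => Fin.cons (1 - ∑ i, sc i * x u i) (fun i => sc i * x u i) with hzdef
  have hz0 : ∀ u, z u 0 = 1 - ∑ i, sc i * x u i := fun u => rfl
  have hzs : ∀ u i, z u (Fin.succ i) = sc i * x u i := fun u i => rfl
  have hzsum : ∀ u, ∑ k, z u k = 1 := by
    intro u
    rw [Fin.sum_univ_succ, hz0]
    simp only [hzs]
    ring
  have hsum_nonneg : ∀ u, 0 ≤ u → 0 ≤ ∑ i, sc i * x u i := fun u hu =>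
    Finset.sum_nonneg fun i _ => mul_nonneg (hscpos i).le (hpos u hu i)
  have hsum_le : ∀ u, 0 ≤ u → ∑ i, sc i * x u i ≤ 1 - c/2 := by
    intro u hu
    have hsplit : ∑ i, sc i * x u i
        = sc i₀ * x u i₀ + ∑ i ∈ Finset.univ.erase i₀, sc i * x u i :=
      (Finset.add_sum_erase _ _ (Finset.mem_univ i₀)).symm
    have h1 : sc i₀ * x u i₀ ≤ 1 - c := by
      rw [hsc1, one_mul]; exact hx1bd u hu
    have h2 : ∑ i ∈ Finset.univ.erase i₀, sc i * x u i ≤ c/2 := by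
      have hterm : ∀ i ∈ Finset.univ.erase i₀, sc i * x u i ≤ lam * B := by
        intro i hi
        have : sc i = lam := by
          simp only [hscdef]
          rw [if_neg (Finset.ne_of_mem_erase hi)]
        rw [this]
        exact mul_le_mul_of_nonneg_left (hxB u hu i) hlampos.le
      calc ∑ i ∈ Finset.univ.erase i₀, sc i * x u i
          ≤ ∑ _i ∈ Finset.univ.erase i₀, lam * B := Finset.sum_le_sum hterm
        _ = (Finset.univ.erase i₀).card * (lam * B) := by
            rw [Finset.sum_const, nsmul_eq_mul]
        _ ≤ n * (lam * B) := by
            have hcard : ((Finset.univ.erase i₀).card : ℝ) ≤ n := by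
              have := Finset.card_erase_le (a := i₀) (s := (Finset.univ : Finset (Fin n)))
              have h2 := this.trans (le_of_eq (Finset.card_univ (α := Fin n)))
              calc ((Finset.univ.erase i₀).card : ℝ) ≤ (Fintype.card (Fin n) : ℝ) := by
                    exact_mod_cast this.trans (le_of_eq (Finset.card_univ))
                _ = n := by simp
            exact mul_le_mul_of_nonneg_right hcard (by positivity)
        _ = c/2 := by
            rw [hlamdef]
            field_simp
    rw [hsplit]
    linarith
  have hz0lb : ∀ u, 0 ≤ u → c/2 ≤ z u 0 := by
    intro u hu; rw [hz0]; linarith [hsum_le u hu]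
  have hz0ub : ∀ u, 0 ≤ u → z u 0 ≤ 1 := by
    intro u hu; rw [hz0]; linarith [hsum_nonneg u hu]
  have hz00 : z 0 0 = 1 := by rw [hz0]; simp [hx0]
  -- derivatives of z coordinates
  have hderz0 : ∀ u, 0 ≤ u →
      HasDerivAt (fun v => z v 0) (-(∑ i, sc i * eval (x u) (p i))) u := by
    intro u hu
    have h : HasDerivAt (fun v => ∑ i, sc i * x v i)
        (∑ i, sc i * eval (x u) (p i)) u :=
      HasDerivAt.fun_sum fun i _ => (hode u hu i).const_mul (sc i)
    have h2 := h.const_sub 1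
    simpa only [hz0] using h2
  have hderzs : ∀ u, 0 ≤ u → ∀ i,
      HasDerivAt (fun v => z v (Fin.succ i)) (sc i * eval (x u) (p i)) u := by
    intro u hu i
    have h := (hode u hu i).const_mul (sc i)
    simpa only [hzs] using h
  -- the time-change generator
  set g : ℝ → ℝ := fun u => z (max u 0) 0 with hgdef
  have hgeq : ∀ u, 0 ≤ u → g u = z u 0 := by
    intro u hu; rw [hgdef]; simp [max_eq_left hu]
  have hglb : ∀ u, c/2 ≤ g u := fun u => hz0lb _ (le_max_right u 0)
  have hgub : ∀ u, g u ≤ 1 := fun u => hz0ub _ (le_max_right u 0)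
  have hgpos : ∀ u, 0 < g u := fun u => lt_of_lt_of_le (by positivity) (hglb u)
  have hgcont : Continuous g := by
    rw [continuous_iff_continuousAt]
    intro u
    have h1 : ContinuousAt (fun v => z v 0) (max u 0) :=
      (hderz0 _ (le_max_right u 0)).continuousAt
    have h2 : ContinuousAt (fun v : ℝ => max v 0) u :=
      (continuous_id.max continuous_const).continuousAt
    exact ContinuousAt.comp (x := u) (g := fun v => z v 0) (f := fun v : ℝ => max v 0) h1 h2
  -- the rescaling integral
  have hginv_cont : Continuous fun u => (g u)⁻¹ :=
    hgcont.inv₀ fun u => (hgpos u).ne'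
  set G : ℝ → ℝ := fun u => ∫ v in (0:ℝ)..u, (g v)⁻¹ with hGdef
  have hG' : ∀ u, HasDerivAt G ((g u)⁻¹) u := by
    intro u
    exact intervalIntegral.integral_hasDerivAt_right
      (hginv_cont.intervalIntegrable _ _)
      (hginv_cont.stronglyMeasurable.stronglyMeasurableAtFilter)
      hginv_cont.continuousAt
  have hGmono : StrictMono G := by
    apply strictMono_of_deriv_pos
    intro u
    rw [(hG' u).deriv]
    exact inv_pos.mpr (hgpos u)
  have hGdiff : Differentiable ℝ G := fun u => (hG' u).differentiableAt
  have hGcont : Continuous G := hGdiff.continuous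
  have hG0 : G 0 = 0 := intervalIntegral.integral_same
  -- G grows at least linearly and at most like (2/c) t
  have hmono1 : Monotone (fun u => G u - u) := by
    apply monotone_of_deriv_nonneg
    · exact hGdiff.sub differentiable_id
    · intro u
      rw [((hG' u).fun_sub (hasDerivAt_id' u)).deriv]
      have : g u ≤ 1 := hgub u
      have h1 : (1:ℝ) ≤ (g u)⁻¹ := (one_le_inv_iff₀.mpr ⟨hgpos u, this⟩)
      linarith
  have hmono2 : Monotone (fun u => (2/c) * u - G u) := by
    apply monotone_of_deriv_nonneg
    · exact (differentiable_id.const_mul _).sub hGdiff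
    · intro u
      rw [(((hasDerivAt_id' u).const_mul (2/c)).fun_sub (hG' u)).deriv]
      have h1 : (g u)⁻¹ ≤ 2/c := by
        rw [← inv_div]
        refine inv_anti₀ (by positivity) (hglb u)
      simp only [mul_one]
      linarith
  have hGlower : ∀ u, 0 ≤ u → u ≤ G u := by
    intro u hu
    have := hmono1 hu
    simp only [hG0] at this
    linarith
  have hGupper2 : ∀ u, 0 ≤ u → G u ≤ (2/c) * u := by
    intro u hu
    have := hmono2 hu
    simp only [hG0] at this
    linarith
  have hGneg : ∀ u, u ≤ 0 → G u ≤ u := by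
    intro u hu
    have := hmono1 hu
    simp only [hG0] at this
    linarith
  have hGtop : Tendsto G atTop atTop :=
    tendsto_atTop_mono' atTop
      ((eventually_ge_atTop (0:ℝ)).mono fun u hu => hGlower u hu) tendsto_id
  have hGbot : Tendsto G atBot atBot :=
    tendsto_atBot_mono' atBot
      ((eventually_le_atBot (0:ℝ)).mono fun u hu => hGneg u hu) tendsto_id
  have hGsurj : Function.Surjective G := hGcont.surjective hGtop hGbot
  -- the time change
  set E := StrictMono.orderIsoOfSurjective G hGmono hGsurj with hEdef
  set τ : ℝ → ℝ := fun t => E.symm t with hτdef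
  have hGτ : ∀ t, G (τ t) = t := fun t =>
    StrictMono.orderIsoOfSurjective_self_symm_apply G hGmono hGsurj t
  have hτcont : Continuous τ := E.symm.continuous
  have hτ0 : τ 0 = 0 := by
    have h := StrictMono.orderIsoOfSurjective_symm_apply_self G hGmono hGsurj 0
    rw [hG0] at h
    exact h
  have hτmono : StrictMono τ := E.symm.strictMono
  have hτnonneg : ∀ t, 0 ≤ t → 0 ≤ τ t := by
    intro t ht
    rw [← hτ0]
    exact hτmono.monotone ht
  have hτderiv : ∀ t, HasDerivAt τ (g (τ t)) t := by
    intro t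
    have h := HasDerivAt.of_local_left_inverse hτcont.continuousAt
      (hG' (τ t)) (inv_ne_zero (hgpos (τ t)).ne') (Eventually.of_forall hGτ)
    simpa [inv_inv] using h
  have hτtop : Tendsto τ atTop atTop := by
    apply tendsto_atTop_mono' atTop
      ((eventually_ge_atTop (0:ℝ)).mono (fun t ht => ?_))
      (tendsto_id.const_mul_atTop (half_pos hc))
    have h1 : t ≤ (2/c) * τ t := by
      have h1' : G (τ t) ≤ (2/c) * τ t := hGupper2 (τ t) (hτnonneg t ht)
      rw [hGτ t] at h1'
      exact h1' 
    have h2 : (c/2) * t ≤ (c/2) * ((2/c) * τ t) :=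
      mul_le_mul_of_nonneg_left h1 (by positivity)
    calc c/2 * t ≤ (c/2) * ((2/c) * τ t) := h2
      _ = τ t := by field_simp
  -- ===== polynomial constructions =====
  set φf : Fin n → MvPolynomial (Fin (n+1)) ℝ :=
    fun i => MvPolynomial.C ((sc i)⁻¹) * X (Fin.succ i) with hφfdef
  have hφfNN : ∀ i, NN (φf i) := fun i =>
    (NN_C (inv_nonneg.mpr (hscpos i).le)).mul (NN_X _)
  have hφfdeg : ∀ i, (φf i).totalDegree ≤ 1 := by
    intro i
    refine (totalDegree_mul _ _).trans ?_
    simp [totalDegree_C, totalDegree_X]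
  set R : Fin n → MvPolynomial (Fin (n+1)) ℝ :=
    fun i => MvPolynomial.C (sc i) * aeval φf (r i) with hRdef
  set Sp : Fin n → MvPolynomial (Fin (n+1)) ℝ := fun i => aeval φf (s i) with hSpdef
  have hRNN : ∀ i, NN (R i) := fun i =>
    (NN_C (hscpos i).le).mul (NN_aeval _ hφfNN (hrNN i))
  have hSpNN : ∀ i, NN (Sp i) := fun i => NN_aeval _ hφfNN (hsNN i)
  have hRdeg : ∀ i, (R i).totalDegree ≤ 2 := by
    intro i
    refine (totalDegree_mul _ _).trans ?_
    rw [totalDegree_C, zero_add]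
    exact (totalDegree_aeval_le _ hφfdeg _).trans (hrdeg i)
  have hSpdeg : ∀ i, (Sp i).totalDegree ≤ 1 := fun i =>
    (totalDegree_aeval_le _ hφfdeg _).trans (hsdeg i)
  have hmg2R : ∀ i, (hmg 2 (R i)).IsHomogeneous 2 := fun i => hmg_isHomogeneous (hRdeg i)
  have hmg1S : ∀ i, (hmg 1 (Sp i)).IsHomogeneous 1 := fun i => hmg_isHomogeneous (hSpdeg i)
  have hmg2RNN : ∀ i, NN (hmg 2 (R i)) := fun i => NN_hmg _ (hRNN i)
  have hmg1SNN : ∀ i, NN (hmg 1 (Sp i)) := fun i => NN_hmg _ (hSpNN i)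
  -- evaluation identities along z
  have hevalφ : ∀ u (q : MvPolynomial (Fin n) ℝ),
      eval (z u) (aeval φf q) = eval (x u) q := by
    intro u q
    rw [eval_aeval]
    have hw : (fun i => eval (z u) (φf i)) = x u := by
      funext i
      show eval (z u) (MvPolynomial.C ((sc i)⁻¹) * X (Fin.succ i)) = x u i
      rw [eval_mul, eval_C, eval_X, hzs, ← mul_assoc, inv_mul_cancel₀ (hscpos i).ne', one_mul]
    rw [hw]
  have hevalR : ∀ u i, eval (z u) (R i) = sc i * eval (x u) (r i) := by
    intro u i
    show eval (z u) (MvPolynomial.C (sc i) * aeval φf (r i)) = _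
    rw [eval_mul, eval_C, hevalφ]
  have hevalSp : ∀ u i, eval (z u) (Sp i) = eval (x u) (s i) := fun u i => hevalφ u (s i)
  have hevalhmg2R : ∀ u i, eval (z u) (hmg 2 (R i)) = sc i * eval (x u) (r i) := by
    intro u i
    rw [eval_hmg _ _ (hzsum u), hevalR]
  have hevalhmg1S : ∀ u i, eval (z u) (hmg 1 (Sp i)) = eval (x u) (s i) := by
    intro u i
    rw [eval_hmg _ _ (hzsum u), hevalSp]
  -- the cubic system
  set Csys : Fin (n+1) → MvPolynomial (Fin (n+1)) ℝ :=
    Fin.cons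
      ((X 0 * ∑ i, X (Fin.succ i) * hmg 1 (Sp i)) - X 0 * ∑ i, hmg 2 (R i))
      (fun i => X 0 * hmg 2 (R i) - X (Fin.succ i) * (X 0 * hmg 1 (Sp i))) with hCsysdef
  have hCsys0 : Csys 0
      = (X 0 * ∑ i, X (Fin.succ i) * hmg 1 (Sp i)) - X 0 * ∑ i, hmg 2 (R i) := rfl
  have hCsyss : ∀ i, Csys (Fin.succ i)
      = X 0 * hmg 2 (R i) - X (Fin.succ i) * (X 0 * hmg 1 (Sp i)) := fun i => rfl
  -- structure of each component
  have hstruct : ∀ k : Fin (n + 1), ∃ A B : MvPolynomial (Fin (n+1)) ℝ,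
      (∀ d, 0 ≤ A.coeff d) ∧ (∀ d, 0 ≤ B.coeff d) ∧
      A.IsHomogeneous 3 ∧ B.IsHomogeneous 2 ∧
      A.coeff (Finsupp.single k 3) = 0 ∧
      Csys k = A - X k * B := by
    intro k
    induction k using Fin.cases with
    | zero =>
        refine ⟨X 0 * ∑ i, X (Fin.succ i) * hmg 1 (Sp i), ∑ i, hmg 2 (R i),
          ?_, ?_, ?_, ?_, ?_, hCsys0⟩
        · exact (NN_X _).mul (NN.sum _ _ fun i _ => (NN_X _).mul (hmg1SNN i))
        · exact NN.sum _ _ fun i _ => hmg2RNN i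
        · have h : ((X (0:Fin (n+1)) : MvPolynomial (Fin (n+1)) ℝ)
              * ∑ i, X (Fin.succ i) * hmg 1 (Sp i)).IsHomogeneous (1 + 2) :=
            (isHomogeneous_X _ _).mul
              (IsHomogeneous.sum _ _ _ fun i _ => by
                simpa using (isHomogeneous_X _ (Fin.succ i)).mul (hmg1S i))
          simpa using h
        · exact IsHomogeneous.sum _ _ _ fun i _ => hmg2R i
        · rw [coeff_X_mul']
          have hmem : (0:Fin (n+1)) ∈ (Finsupp.single (0:Fin (n+1)) 3).support := by
            simp
          rw [if_pos hmem]
          have hsub : (Finsupp.single (0:Fin (n+1)) 3 - Finsupp.single 0 1)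
              = Finsupp.single (0:Fin (n+1)) 2 := by
            ext a
            simp only [Finsupp.tsub_apply, Finsupp.single_apply]
            split <;> simp
          rw [hsub, coeff_sum]
          refine Finset.sum_eq_zero fun i _ => ?_
          rw [coeff_X_mul']
          rw [if_neg]
          simp [Finsupp.single_apply, (Fin.succ_ne_zero i).symm]
    | succ i =>
        refine ⟨X 0 * hmg 2 (R i), X 0 * hmg 1 (Sp i),
          ?_, ?_, ?_, ?_, ?_, hCsyss i⟩
        · exact (NN_X _).mul (hmg2RNN i)
        · exact (NN_X _).mul (hmg1SNN i)
        · simpa using (isHomogeneous_X _ (0:Fin (n+1))).mul (hmg2R i)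
        · simpa using (isHomogeneous_X _ (0:Fin (n+1))).mul (hmg1S i)
        · rw [coeff_X_mul']
          rw [if_neg]
          simp [Finsupp.single_apply, Fin.succ_ne_zero i, (Fin.succ_ne_zero i).symm]
  -- homogeneity
  have hhom : ∀ k : Fin (n + 1), (Csys k).IsHomogeneous 3 := by
    intro k
    obtain ⟨A, Bq, _, _, hA, hB, _, hCk⟩ := hstruct k
    rw [hCk]
    have h : ((X k : MvPolynomial (Fin (n+1)) ℝ) * Bq).IsHomogeneous (1 + 2) :=
      (isHomogeneous_X _ _).mul hB
    exact hA.sub (by simpa using h)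
  -- conservation
  have hCsum : ∑ k, Csys k = 0 := by
    rw [Fin.sum_univ_succ, hCsys0]
    simp only [hCsyss]
    rw [Finset.sum_sub_distrib]
    have h1 : ∑ i, X (Fin.succ i) * ((X (0:Fin (n+1)) : MvPolynomial (Fin (n+1)) ℝ)
        * hmg 1 (Sp i)) = X 0 * ∑ i, X (Fin.succ i) * hmg 1 (Sp i) := by
      rw [Finset.mul_sum]
      exact Finset.sum_congr rfl fun i _ => by ring
    have h2 : ∑ i, (X (0:Fin (n+1)) : MvPolynomial (Fin (n+1)) ℝ) * hmg 2 (R i)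
        = X 0 * ∑ i, hmg 2 (R i) := by
      rw [Finset.mul_sum]
    rw [h1, h2]
    ring
  -- the solution
  set y : ℝ → Fin (n+1) → ℝ := fun t => z (τ t) with hydef
  have hode' : ∀ t : ℝ, 0 ≤ t → ∀ k : Fin (n + 1),
      HasDerivAt (fun t => y t k) (eval (y t) (Csys k)) t := by
    intro t ht k
    have hτt : 0 ≤ τ t := hτnonneg t ht
    have hgτ : g (τ t) = z (τ t) 0 := hgeq _ hτt
    induction k using Fin.cases with
    | zero =>
        have hdz := hderz0 (τ t) hτt
        have hcomp := HasDerivAt.comp t hdz (hτderiv t)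
        have heval : eval (y t) (Csys 0)
            = (-(∑ i, sc i * eval (x (τ t)) (p i))) * g (τ t) := by
          rw [hCsys0]
          simp only [hydef]
          rw [map_sub, eval_mul, eval_mul, eval_X, eval_sum]
          have hterm : ∀ i ∈ (Finset.univ : Finset (Fin n)),
              eval (z (τ t)) (X (Fin.succ i) * hmg 1 (Sp i))
                = sc i * x (τ t) i * eval (x (τ t)) (s i) := by
            intro i _
            rw [eval_mul, eval_X, hzs, hevalhmg1S]
          rw [Finset.sum_congr rfl hterm, eval_sum]
          have hterm2 : ∀ i ∈ (Finset.univ : Finset (Fin n)),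
              eval (z (τ t)) (hmg 2 (R i)) = sc i * eval (x (τ t)) (r i) := by
            intro i _
            rw [hevalhmg2R]
          rw [Finset.sum_congr rfl hterm2]
          have hsum' : ∑ i, sc i * eval (x (τ t)) (p i)
              = ∑ i, sc i * eval (x (τ t)) (r i)
                - ∑ i, sc i * x (τ t) i * eval (x (τ t)) (s i) := by
            rw [← Finset.sum_sub_distrib]
            refine Finset.sum_congr rfl fun i _ => ?_
            rw [hps i, map_sub, eval_mul, eval_X]
            ring
          rw [hsum', hgτ]
          ring
        rw [heval]
        exact hcomp
    | succ i =>
        have hdz := hderzs (τ t) hτt i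
        have hcomp := HasDerivAt.comp t hdz (hτderiv t)
        have heval : eval (y t) (Csys (Fin.succ i))
            = sc i * eval (x (τ t)) (p i) * g (τ t) := by
          rw [hCsyss i]
          simp only [hydef]
          rw [map_sub, eval_mul, eval_mul, eval_mul, eval_X, eval_X,
            hevalhmg2R, hevalhmg1S, hzs, hps i, map_sub, eval_mul, eval_X, hgτ]
          ring
        rw [heval]
        exact hcomp
  -- conclusion
  refine ⟨Csys, y, hstruct, hhom, hCsum, hode', ?_, ?_, ?_, ?_, ?_⟩
  · show z (τ 0) 0 = 1
    rw [hτ0]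
    exact hz00
  · intro k hk
    induction k using Fin.cases with
    | zero => exact absurd rfl hk
    | succ i =>
        show z (τ 0) (Fin.succ i) = 0
        rw [hτ0, hzs, hx0, mul_zero]
  · intro t ht k
    induction k using Fin.cases with
    | zero =>
        have := hz0lb (τ t) (hτnonneg t ht)
        show (0:ℝ) ≤ z (τ t) 0
        linarith [half_pos hc]
    | succ i =>
        show (0:ℝ) ≤ z (τ t) (Fin.succ i)
        rw [hzs]
        exact mul_nonneg (hscpos i).le (hpos _ (hτnonneg t ht) i)
  · intro t ht
    exact hzsum (τ t)
  · have h1 : (1 : Fin (n+1)) = Fin.succ i₀ := by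
      apply Fin.ext
      rw [Fin.val_one', Fin.val_succ, hi₀]
      simp [Nat.mod_eq_of_lt (by omega : 1 < n + 1)]
    have heq : (fun t => y t 1) = fun t => x (τ t) i₀ := by
      funext t
      simp only [hydef]
      rw [h1, hzs, hsc1, one_mul]
    rw [heq]
    exact hlim.comp hτtop
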